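/- Let P be a reversible irreducible Markov chain on a finite state space χ with stationary measure π, let E = {(x,y) : P(x,y) > 0}, and for each ordered pair (x,y) of distinct states choose a path γ_{xy} in the graph (χ, E). Define κ = max_{e∈E} Q(e)^{-1} Σ_{γ_{xy} ∋ e} |γ_{xy}| π(x)π(y), where Q(x,y) = π(x)P(x,y). Then the second largest eigenvalue β₁ of P satisfies β₁ ≤ 1 − 1/κ. -/

import Mathlib

section DSAux

variable {α : Type*}

theorem DS.list_cs : ∀ l : List ℝ, l.sum ^ 2 ≤ l.length * (l.map (fun x => x ^ 2)).sum := by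
  intro l
  induction l with
  | nil => simp
  | cons a l ih =>
    simp only [List.sum_cons, List.length_cons, List.map_cons, Nat.cast_add, Nat.cast_one]
    set S := l.sum
    set Q := (l.map (fun x => x ^ 2)).sum with hQdef
    rcases Nat.eq_zero_or_pos l.length with h0 | hpos
    · have hl : l = [] := List.length_eq_zero_iff.mp h0
      subst hl
      simp only [List.sum_nil, List.map_nil, List.length_nil, Nat.cast_zero, zero_add,
        add_zero, one_mul] at *
      simp [S, Q]
    · set n := (l.length : ℝ) with hn
      have hn1 : (1:ℝ) ≤ n := by rw [hn]; exact_mod_cast hpos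
      have key : n * ((n+1) * (a^2 + Q) - (a + S)^2)
          = (n*a - S)^2 + (n+1) * (n*Q - S^2) := by ring
      have h2 : 0 ≤ (n*a - S)^2 + (n+1) * (n*Q - S^2) := by
        nlinarith [sq_nonneg (n*a - S), ih]
      nlinarith [key, h2, hn1]

theorem DS.telescope (f : α → ℝ) :
    ∀ (l : List α) (x y : α), l.head? = some x → l.getLast? = some y →
      ((l.zip l.tail).map (fun e => f e.2 - f e.1)).sum = f y - f x := by
  intro l
  induction l with
  | nil => intro x y h; simp at h
  | cons a t ih =>
    intro x y hh hl
    simp only [List.head?_cons, Option.some.injEq] at hh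
    subst hh
    cases t with
    | nil => simp at hl ⊢; simp [hl]
    | cons b t' =>
      have hl' : (b :: t').getLast? = some y := by
        rwa [List.getLast?_cons_cons] at hl
      have := ih b y rfl hl'
      simp only [List.zip_cons_cons, List.tail_cons, List.map_cons, List.sum_cons]
      rw [show (b :: t').zip (b :: t').tail = (b :: t').zip t' from rfl] at this
      rw [this]; ring

theorem DS.chain'_rel_of_mem_zip {R : α → α → Prop} :
    ∀ {l : List α}, l.Chain' R → ∀ {e : α × α}, e ∈ l.zip l.tail → R e.1 e.2 := by
  intro l
  induction l with
  | nil => intro _ e he; simp at he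
  | cons a t ih =>
    intro hc e he
    cases t with
    | nil => simp at he
    | cons b t' =>
      unfold List.Chain' at hc
      rw [List.isChain_cons_cons] at hc
      simp only [List.tail_cons, List.zip_cons_cons, List.mem_cons] at he
      rcases he with rfl | he
      · exact hc.1
      · exact ih hc.2 (by simpa using he)

theorem DS.edges_append : ∀ (u : List α) (a : α) (t : List α),
    (u ++ a :: t).zip (u ++ a :: t).tail
      = ((u ++ [a]).zip (u ++ [a]).tail) ++ ((a :: t).zip t) := by
  intro u
  induction u with
  | nil => intro a t; simp
  | cons b u' ih =>
    intro a t
    cases u' with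
    | nil => simp
    | cons c u'' =>
      have := ih a t
      simp only [List.cons_append, List.tail_cons, List.zip_cons_cons] at this ⊢
      rw [this]

theorem DS.not_nodup_split : ∀ {l : List α}, ¬ l.Nodup →
    ∃ (a : α) (l1 l2 l3 : List α), l = l1 ++ a :: (l2 ++ a :: l3) := by
  intro l
  induction l with
  | nil => intro h; exact absurd List.nodup_nil h
  | cons b t ih =>
    intro h
    by_cases hb : b ∈ t
    · obtain ⟨l2, l3, rfl⟩ := List.append_of_mem hb
      exact ⟨b, [], l2, l3, by simp⟩
    · have ht : ¬ t.Nodup := fun hn => h (List.nodup_cons.mpr ⟨hb, hn⟩)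
      obtain ⟨a, l1, l2, l3, rfl⟩ := ih ht
      exact ⟨a, b :: l1, l2, l3, by simp⟩

theorem DS.exists_nodup_path {R : α → α → Prop} :
    ∀ (L : List α), L.Chain' R → ∀ {x y : α}, L.head? = some x → L.getLast? = some y →
    ∃ M : List α, M.Chain' R ∧ M.head? = some x ∧ M.getLast? = some y ∧ M.Nodup ∧
      M.length ≤ L.length ∧ ∀ e ∈ M.zip M.tail, e ∈ L.zip L.tail := by
  suffices h : ∀ (n : ℕ) (L : List α), L.length = n → L.Chain' R → ∀ {x y : α},
      L.head? = some x → L.getLast? = some y →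
      ∃ M : List α, M.Chain' R ∧ M.head? = some x ∧ M.getLast? = some y ∧ M.Nodup ∧
        M.length ≤ L.length ∧ ∀ e ∈ M.zip M.tail, e ∈ L.zip L.tail by
    intro L hc x y hh hl
    exact h L.length L rfl hc hh hl
  intro n
  induction n using Nat.strong_induction_on with
  | _ n ih =>
  intro L hN hc x y hh hl
  by_cases hnd : L.Nodup
  · exact ⟨L, hc, hh, hl, hnd, le_rfl, fun e he => he⟩
  · obtain ⟨a, l1, l2, l3, rfl⟩ := DS.not_nodup_split hnd
    -- M₀ := l1 ++ a :: l3
    have hlen : (l1 ++ a :: l3).length < n := by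
      subst hN; simp [List.length_append]
    -- chain'
    have hc1 : (l1 ++ a :: l3).Chain' R := by
      rw [show l1 ++ a :: (l2 ++ a :: l3) = l1 ++ ((a :: l2) ++ (a :: l3)) by simp] at hc
      unfold List.Chain' at hc ⊢
      rw [List.isChain_append] at hc
      obtain ⟨hcl1, hcmid, hlink⟩ := hc
      rw [List.isChain_append] at hcmid
      rw [List.isChain_append]
      refine ⟨hcl1, hcmid.2.1, ?_⟩
      intro p hp q hq
      exact hlink p hp q (by simpa using hq)
    -- head?
    have hh1 : (l1 ++ a :: l3).head? = some x := by
      rw [List.head?_append] at hh ⊢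
      simpa using hh
    -- getLast?
    have hl1 : (l1 ++ a :: l3).getLast? = some y := by
      rw [show l1 ++ a :: (l2 ++ a :: l3) = (l1 ++ (a :: l2)) ++ (a :: l3) by simp] at hl
      rw [List.getLast?_append] at hl ⊢
      cases h3 : (a :: l3).getLast? with
      | none => exact absurd (List.getLast?_eq_none_iff.mp h3) (by simp)
      | some z =>
        rw [h3] at hl
        simpa using hl
    -- edges subset
    have hsub : ∀ e ∈ (l1 ++ a :: l3).zip (l1 ++ a :: l3).tail,
        e ∈ (l1 ++ a :: (l2 ++ a :: l3)).zip (l1 ++ a :: (l2 ++ a :: l3)).tail := by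
      intro e he
      rw [DS.edges_append l1 a l3] at he
      rw [DS.edges_append l1 a (l2 ++ a :: l3)]
      rcases List.mem_append.mp he with h | h
      · exact List.mem_append.mpr (Or.inl h)
      · refine List.mem_append.mpr (Or.inr ?_)
        have h2 := DS.edges_append (a :: l2) a l3
        simp only [List.cons_append, List.tail_cons] at h2 ⊢
        rw [h2]
        exact List.mem_append.mpr (Or.inr h)
    obtain ⟨M, h1, h2, h3, h4, h5, h6⟩ := ih _ hlen (l1 ++ a :: l3) rfl hc1 hh1 hl1
    refine ⟨M, h1, h2, h3, h4, ?_, fun e he => hsub e (h6 e he)⟩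
    simp only [List.length_append, List.length_cons] at h5 ⊢
    omega

theorem DS.nodup_zip_tail {α : Type*} {M : List α} (h : M.Nodup) : (M.zip M.tail).Nodup := by
  have hlen : M.tail.length ≤ M.length := by cases M <;> simp
  have hmap : (M.zip M.tail).map Prod.snd = M.tail := List.map_snd_zip hlen
  have h2 : ((M.zip M.tail).map Prod.snd).Nodup := by rw [hmap]; exact h.tail
  exact h2.of_map _

theorem DS.list_sum_le_indicator {χ : Type*} [Fintype χ] [DecidableEq χ]
    (l l' : List (χ × χ)) (h : l.Nodup) (hsub : ∀ e ∈ l, e ∈ l')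
    (f : χ × χ → ℝ) (hf : ∀ e, 0 ≤ f e) :
    (l.map f).sum ≤ ∑ e : χ × χ, if e ∈ l' then f e else 0 := by
  rw [← List.sum_toFinset f h]
  rw [show (∑ e : χ × χ, if e ∈ l' then f e else 0)
      = ∑ e ∈ Finset.univ.filter (· ∈ l'), f e from (Finset.sum_filter _ _).symm]
  apply Finset.sum_le_sum_of_subset_of_nonneg
  · intro e he
    simp only [Finset.mem_filter, Finset.mem_univ, true_and]
    exact hsub e (List.mem_toFinset.mp he)
  · intro e _ _; exact hf e

end DSAux

theorem diaconis_stroock_geometric_bound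
    {χ : Type*} [Fintype χ] [DecidableEq χ] [Nonempty χ]
    (P : Matrix χ χ ℝ) (π : χ → ℝ)
    (hP0 : ∀ x y, 0 ≤ P x y) (hP1 : ∀ x, ∑ y, P x y = 1)
    (hπpos : ∀ x, 0 < π x) (hπ1 : ∑ x, π x = 1)
    (hrev : ∀ x y, π x * P x y = π y * P y x)
    (hirr : ∀ x y, ∃ k : ℕ, 0 < (P ^ k) x y)
    (γ : χ → χ → List χ)
    (hhead : ∀ x y, x ≠ y → (γ x y).head? = some x)
    (hlast : ∀ x y, x ≠ y → (γ x y).getLast? = some y)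
    (hchain : ∀ x y, x ≠ y → (γ x y).Chain' (fun a b => 0 < P a b))
    (κ : ℝ) (hκ : 0 < κ)
    (hκbound : ∀ e : χ × χ, 0 < P e.1 e.2 →
      (π e.1 * P e.1 e.2)⁻¹ *
        (∑ x, ∑ y,
          if x ≠ y ∧ e ∈ (γ x y).zip (γ x y).tail then
            (((γ x y).length - 1 : ℕ) : ℝ) * (π x * π y)
          else 0) ≤ κ)
    (μ : ℝ) (hμ : μ ∈ spectrum ℝ P) (hμ1 : μ ≠ 1) :
    μ ≤ 1 - 1 / κ := by
  -- extract a real eigenvector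
  obtain ⟨φ, hφ0, heig⟩ : ∃ φ : χ → ℝ, φ ≠ 0 ∧ ∀ x, ∑ y, P x y * φ y = μ * φ x := by
    rw [spectrum.mem_iff] at hμ
    have hdet : (μ • (1 : Matrix χ χ ℝ) - P).det = 0 := by
      by_contra hd
      exact hμ (by
        have h1 : IsUnit (μ • (1 : Matrix χ χ ℝ) - P).det := isUnit_iff_ne_zero.mpr hd
        have h2 := (Matrix.isUnit_iff_isUnit_det _).mpr h1
        simpa [Algebra.algebraMap_eq_smul_one] using h2)
    obtain ⟨v, hv0, hv⟩ := (Matrix.exists_mulVec_eq_zero_iff).mpr hdet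
    refine ⟨v, hv0, fun x => ?_⟩
    have hvx := congrFun hv x
    simp only [Matrix.sub_mulVec, Matrix.smul_mulVec, Matrix.one_mulVec,
      Pi.sub_apply, Pi.smul_apply, smul_eq_mul, Pi.zero_apply] at hvx
    have h2 : (P.mulVec v) x = μ * v x := by linarith
    rw [← h2]
    simp [Matrix.mulVec, dotProduct]
  set S : ℝ := ∑ x, π x * φ x ^ 2 with hSdef
  have hSpos : 0 < S := by
    obtain ⟨x0, hx0⟩ := Function.ne_iff.mp hφ0
    apply Finset.sum_pos' (fun x _ => mul_nonneg (hπpos x).le (sq_nonneg _))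
    refine ⟨x0, Finset.mem_univ x0, mul_pos (hπpos x0) ?_⟩
    have : φ x0 ≠ 0 := hx0
    positivity
  -- mean zero
  have hmean : ∑ x, π x * φ x = 0 := by
    have hcol : ∀ y, ∑ x, π x * P x y = π y := by
      intro y
      simp_rw [hrev _ y, ← Finset.mul_sum, hP1, mul_one]
    have h1 : ∑ x, π x * (μ * φ x) = ∑ x, π x * φ x := by
      calc ∑ x, π x * (μ * φ x) = ∑ x, π x * ∑ y, P x y * φ y := by
            simp_rw [heig]
        _ = ∑ x, ∑ y, (π x * P x y) * φ y := by
            simp_rw [Finset.mul_sum, mul_assoc]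
        _ = ∑ y, (∑ x, π x * P x y) * φ y := by
            rw [Finset.sum_comm]; simp_rw [Finset.sum_mul]
        _ = ∑ y, π y * φ y := by simp_rw [hcol]
    have h2 : (μ - 1) * ∑ x, π x * φ x = 0 := by
      have : μ * ∑ x, π x * φ x = ∑ x, π x * φ x := by
        rw [Finset.mul_sum]; rw [← h1]; apply Finset.sum_congr rfl; intro x _; ring
      linarith
    rcases mul_eq_zero.mp h2 with h | h
    · exact absurd (by linarith : μ = 1) hμ1
    · exact h
  -- Dirichlet form identity
  have hD : (∑ x, ∑ y, π x * P x y * (φ x - φ y) ^ 2) = 2 * (1 - μ) * S := by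
    have e1 : ∀ x y, π x * P x y * (φ x - φ y) ^ 2
        = (π x * φ x ^ 2) * P x y + (π y * φ y ^ 2) * P y x
          - 2 * ((π x * φ x) * (P x y * φ y)) := by
      intro x y
      linear_combination (φ y) ^ 2 * hrev x y
    simp_rw [e1]
    have t1 : ∑ x, ∑ y, (π x * φ x ^ 2) * P x y = S := by
      simp_rw [← Finset.mul_sum, hP1, mul_one]
      exact hSdef.symm
    have t3 : ∑ x : χ, ∑ y : χ, (π y * φ y ^ 2) * P y x = S := by
      rw [Finset.sum_comm]
      simp_rw [← Finset.mul_sum, hP1, mul_one]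
      exact hSdef.symm
    have t2 : ∑ x, ∑ y, (π x * φ x) * (P x y * φ y) = μ * S := by
      simp_rw [← Finset.mul_sum, heig]
      rw [hSdef, Finset.mul_sum]
      apply Finset.sum_congr rfl
      intro x _
      ring
    calc ∑ x, ∑ y, ((π x * φ x ^ 2) * P x y + (π y * φ y ^ 2) * P y x
          - 2 * ((π x * φ x) * (P x y * φ y)))
        = (∑ x, ∑ y, (π x * φ x ^ 2) * P x y) + (∑ x, ∑ y, (π y * φ y ^ 2) * P y x)
          - 2 * ∑ x, ∑ y, (π x * φ x) * (P x y * φ y) := by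
          simp_rw [Finset.sum_sub_distrib, Finset.sum_add_distrib, Finset.mul_sum]
      _ = S + S - 2 * (μ * S) := by rw [t1, t2, t3]
      _ = 2 * (1 - μ) * S := by ring
  -- variance identity
  have hC : (∑ x, ∑ y, π x * π y * (φ x - φ y) ^ 2) = 2 * S := by
    have e2 : ∀ x y : χ, π x * π y * (φ x - φ y) ^ 2
        = (π x * φ x ^ 2) * π y + π x * (π y * φ y ^ 2) - 2 * ((π x * φ x) * (π y * φ y)) := by
      intro x y; ring
    simp_rw [e2]
    have u1 : ∑ x, ∑ y, (π x * φ x ^ 2) * π y = S := by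
      simp_rw [← Finset.mul_sum, hπ1, mul_one]
      exact hSdef.symm
    have u2 : ∑ x : χ, ∑ y : χ, π x * (π y * φ y ^ 2) = S := by
      simp_rw [← Finset.mul_sum, ← Finset.sum_mul, hπ1, one_mul]
      exact hSdef.symm
    have u3 : ∑ x : χ, ∑ y : χ, (π x * φ x) * (π y * φ y) = 0 := by
      simp_rw [← Finset.mul_sum, hmean, mul_zero, Finset.sum_const_zero]
    calc ∑ x, ∑ y, ((π x * φ x ^ 2) * π y + π x * (π y * φ y ^ 2)
          - 2 * ((π x * φ x) * (π y * φ y)))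
        = (∑ x, ∑ y, (π x * φ x ^ 2) * π y) + (∑ x, ∑ y, π x * (π y * φ y ^ 2))
          - 2 * ∑ x, ∑ y, (π x * φ x) * (π y * φ y) := by
          simp_rw [Finset.sum_sub_distrib, Finset.sum_add_distrib, Finset.mul_sum]
      _ = S + S - 2 * 0 := by rw [u1, u2, u3]
      _ = 2 * S := by ring
  -- the Poincaré comparison
  set F : χ × χ → ℝ := fun e => (φ e.2 - φ e.1) ^ 2 with hFdef
  have key : ∀ x y : χ, π x * π y * (φ x - φ y) ^ 2
      ≤ ∑ e : χ × χ, (if x ≠ y ∧ e ∈ (γ x y).zip (γ x y).tail then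
          (((γ x y).length - 1 : ℕ) : ℝ) * (π x * π y) else 0) * F e := by
    intro x y
    by_cases hxy : x = y
    · subst hxy
      simp
    · obtain ⟨M, hMc, hMh, hMl, hMnd, hMlen, hMsub⟩ :=
        DS.exists_nodup_path (γ x y) (hchain x y hxy) (hhead x y hxy) (hlast x y hxy)
      set E := (γ x y).zip (γ x y).tail
      set n : ℝ := (((γ x y).length - 1 : ℕ) : ℝ) with hn
      have hn0 : 0 ≤ n := by positivity
      have tel : ((M.zip M.tail).map (fun e => φ e.2 - φ e.1)).sum = φ y - φ x :=
        DS.telescope φ M x y hMh hMl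
      have cs : (φ y - φ x) ^ 2
          ≤ ((M.zip M.tail).length : ℝ) * ((M.zip M.tail).map F).sum := by
        have h := DS.list_cs ((M.zip M.tail).map (fun e => φ e.2 - φ e.1))
        rw [tel, List.length_map, List.map_map] at h
        exact h
      have hT0 : (0:ℝ) ≤ ∑ e : χ × χ, if e ∈ E then F e else 0 := by
        apply Finset.sum_nonneg; intro e _
        split
        · exact sq_nonneg _
        · exact le_rfl
      have ind : ((M.zip M.tail).map F).sum ≤ ∑ e : χ × χ, if e ∈ E then F e else 0 :=
        DS.list_sum_le_indicator (M.zip M.tail) E (DS.nodup_zip_tail hMnd) hMsub F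
          (fun e => sq_nonneg _)
      have hlen : ((M.zip M.tail).length : ℝ) ≤ n := by
        rw [hn]
        have : (M.zip M.tail).length ≤ (γ x y).length - 1 := by
          rw [List.length_zip, List.length_tail]
          omega
        exact_mod_cast this
      have hsum0 : (0:ℝ) ≤ ((M.zip M.tail).map F).sum := by
        apply List.sum_nonneg; intro a ha
        obtain ⟨e, _, rfl⟩ := List.mem_map.mp ha
        exact sq_nonneg _
      have step : (φ x - φ y) ^ 2 ≤ n * ∑ e : χ × χ, if e ∈ E then F e else 0 := by
        have h1 : (φ x - φ y) ^ 2 = (φ y - φ x) ^ 2 := by ring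
        rw [h1]
        calc (φ y - φ x) ^ 2 ≤ ((M.zip M.tail).length : ℝ) * ((M.zip M.tail).map F).sum := cs
          _ ≤ n * ∑ e : χ × χ, if e ∈ E then F e else 0 :=
            mul_le_mul hlen ind hsum0 hn0
      have hR : (∑ e : χ × χ, (if x ≠ y ∧ e ∈ E then n * (π x * π y) else 0) * F e)
          = (n * (π x * π y)) * ∑ e : χ × χ, if e ∈ E then F e else 0 := by
        rw [Finset.mul_sum]
        apply Finset.sum_congr rfl
        intro e _
        by_cases he : e ∈ E
        · rw [if_pos (⟨hxy, he⟩ : x ≠ y ∧ e ∈ E), if_pos he]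
        · rw [if_neg (fun hc => he hc.2), if_neg he, zero_mul, mul_zero]
      rw [hR]
      have hππ : 0 ≤ π x * π y := mul_nonneg (hπpos x).le (hπpos y).le
      calc π x * π y * (φ x - φ y) ^ 2
          ≤ π x * π y * (n * ∑ e : χ × χ, if e ∈ E then F e else 0) :=
            mul_le_mul_of_nonneg_left step hππ
        _ = (n * (π x * π y)) * ∑ e : χ × χ, if e ∈ E then F e else 0 := by ring
  -- sum the key inequality
  set W : χ × χ → ℝ := fun e => ∑ x, ∑ y,
      if x ≠ y ∧ e ∈ (γ x y).zip (γ x y).tail then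
        (((γ x y).length - 1 : ℕ) : ℝ) * (π x * π y) else 0 with hWdef
  have main : 2 * S ≤ ∑ e : χ × χ, W e * F e := by
    rw [← hC]
    calc (∑ x, ∑ y, π x * π y * (φ x - φ y) ^ 2)
        ≤ ∑ x, ∑ y, ∑ e : χ × χ, (if x ≠ y ∧ e ∈ (γ x y).zip (γ x y).tail then
            (((γ x y).length - 1 : ℕ) : ℝ) * (π x * π y) else 0) * F e := by
          apply Finset.sum_le_sum; intro x _
          apply Finset.sum_le_sum; intro y _
          exact key x y
      _ = ∑ x, ∑ e : χ × χ, ∑ y, (if x ≠ y ∧ e ∈ (γ x y).zip (γ x y).tail then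
            (((γ x y).length - 1 : ℕ) : ℝ) * (π x * π y) else 0) * F e :=
          Finset.sum_congr rfl (fun x _ => Finset.sum_comm)
      _ = ∑ e : χ × χ, ∑ x, ∑ y, (if x ≠ y ∧ e ∈ (γ x y).zip (γ x y).tail then
            (((γ x y).length - 1 : ℕ) : ℝ) * (π x * π y) else 0) * F e :=
          Finset.sum_comm
      _ = ∑ e : χ × χ, W e * F e := by
          apply Finset.sum_congr rfl
          intro e _
          rw [hWdef]
          simp only
          rw [Finset.sum_mul]
          apply Finset.sum_congr rfl
          intro x _
          rw [Finset.sum_mul]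
  -- bound W by κ Q
  have term : ∀ e : χ × χ, W e * F e ≤ (κ * (π e.1 * P e.1 e.2)) * F e := by
    intro e
    apply mul_le_mul_of_nonneg_right _ (sq_nonneg _)
    by_cases hPe : 0 < P e.1 e.2
    · have hQ : 0 < π e.1 * P e.1 e.2 := mul_pos (hπpos _) hPe
      have hb := hκbound e hPe
      have h2 := mul_le_mul_of_nonneg_left hb hQ.le
      rw [← mul_assoc, mul_inv_cancel₀ hQ.ne', one_mul] at h2
      calc W e ≤ (π e.1 * P e.1 e.2) * κ := h2
        _ = κ * (π e.1 * P e.1 e.2) := by ring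
    · have hP2 : P e.1 e.2 = 0 := le_antisymm (not_lt.mp hPe) (hP0 _ _)
      have hW0 : W e = 0 := by
        rw [hWdef]
        simp only
        apply Finset.sum_eq_zero; intro x _
        apply Finset.sum_eq_zero; intro y _
        rw [if_neg]
        rintro ⟨hxy, hme⟩
        exact hPe (DS.chain'_rel_of_mem_zip (hchain x y hxy) hme)
      rw [hW0, hP2]
      simp
  have final : ∑ e : χ × χ, W e * F e ≤ κ * (2 * (1 - μ) * S) := by
    calc ∑ e : χ × χ, W e * F e
        ≤ ∑ e : χ × χ, (κ * (π e.1 * P e.1 e.2)) * F e :=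
          Finset.sum_le_sum (fun e _ => term e)
      _ = κ * ∑ e : χ × χ, (π e.1 * P e.1 e.2) * F e := by
          rw [Finset.mul_sum]
          apply Finset.sum_congr rfl
          intro e _
          ring
      _ = κ * (∑ x, ∑ y, π x * P x y * (φ x - φ y) ^ 2) := by
          congr 1
          rw [Fintype.sum_prod_type]
          apply Finset.sum_congr rfl; intro x _
          apply Finset.sum_congr rfl; intro y _
          show (π x * P x y) * (φ y - φ x) ^ 2 = π x * P x y * (φ x - φ y) ^ 2
          ring
      _ = κ * (2 * (1 - μ) * S) := by rw [hD]
  have htot : 2 * S ≤ κ * (2 * (1 - μ) * S) := main.trans final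
  have h1μ : 1 ≤ κ * (1 - μ) := by nlinarith [hSpos, htot]
  have hdiv : 1 / κ ≤ 1 - μ := by
    rw [div_le_iff₀ hκ]
    linarith
  linarith
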